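/- Let a be a positive integer and j an even positive integer. Let A be the set of subsets W of the vertex set {v_1,...,v_{2a}} of the cycle C_{2a} such that (i) for every i ∈ {1,...,a} exactly one of v_i, v_{i+a} lies in W, (ii) either [v_1,v_{2a} ∉ W, v_a,v_{a+1} ∈ W, and C_{2a} − W has j−1 components] or [v_1,v_a ∉ W, v_{a+1},v_{2a} ∈ W, and C_{2a} − W has j+1 components]. Then |A| = C(a,j), the binomial coefficient a choose j. -/

import Mathlib

open SimpleGraph Finset

/-- The number of connected components of the graph obtained from the cycle `C_n`
by deleting the vertex subset `W` together with all incident edges. -/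
noncomputable def cycNumComponents (n : ℕ) (W : Finset (Fin n)) : ℕ :=
  Nat.card ((cycleGraph n).induce ((↑W : Set (Fin n))ᶜ)).ConnectedComponent

set_option linter.unusedSectionVars false
set_option linter.unusedVariables false


open SimpleGraph Finset
open scoped Fin.NatCast Fin.CommRing

variable {n : ℕ}

lemma exists_off {W : Finset (Fin n)} [NeZero n] (hW : W.Nonempty) (i : Fin n) :
    ∃ m : ℕ, i + ((m + 1 : ℕ) : Fin n) ∈ W := by
  obtain ⟨w, hw⟩ := hW
  rcases eq_or_ne w i with rfl | hne
  · refine ⟨n - 1, ?_⟩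
    have h1 : ((n - 1 + 1 : ℕ) : Fin n) = 0 := by
      have h2 : n - 1 + 1 = n := Nat.succ_pred_eq_of_pos (Nat.pos_of_ne_zero (NeZero.ne n))
      rw [h2]; exact Fin.natCast_self n
    rw [h1, add_zero]; exact hw
  · refine ⟨(w - i).val - 1, ?_⟩
    have hpos : 0 < (w - i).val := by
      rcases Nat.eq_zero_or_pos (w - i).val with h | h
      · exfalso; exact hne (by have := sub_eq_zero.mp (Fin.ext h : w - i = 0); exact this)
      · exact h
    have h3 : ((w - i).val - 1 + 1) = (w - i).val := Nat.succ_pred_eq_of_pos hpos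
    rw [h3, Fin.cast_val_eq_self, add_sub_cancel]
    exact hw

section
variable [NeZero n] {W : Finset (Fin n)} (hW : W.Nonempty)

noncomputable def koff (i : Fin n) : ℕ := Nat.find (exists_off hW i)

noncomputable def rend (i : Fin n) : Fin n := i + ((koff hW i : ℕ) : Fin n)

lemma koff_spec (i : Fin n) : i + ((koff hW i + 1 : ℕ) : Fin n) ∈ W :=
  Nat.find_spec (exists_off hW i)

lemma koff_min {i : Fin n} {m : ℕ} (hm : m < koff hW i) :
    i + ((m + 1 : ℕ) : Fin n) ∉ W := Nat.find_min (exists_off hW i) hm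

lemma cast_shift (i : Fin n) (m : ℕ) :
    i + 1 + ((m : ℕ) : Fin n) = i + ((m + 1 : ℕ) : Fin n) := by
  push_cast; ring

lemma rend_not_mem {i : Fin n} (hi : i ∉ W) : rend hW i ∉ W := by
  unfold rend
  rcases Nat.eq_zero_or_pos (koff hW i) with h | h
  · rw [h]; simpa using hi
  · have h2 := koff_min hW (i := i) (m := koff hW i - 1) (by omega)
    rwa [Nat.sub_add_cancel h] at h2

lemma rend_succ_mem (i : Fin n) : rend hW i + 1 ∈ W := by
  have h := koff_spec hW i
  unfold rend
  rw [add_assoc]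
  convert h using 2
  push_cast
  ring

lemma koff_succ {i : Fin n} (hi1 : i + 1 ∉ W) : koff hW i = koff hW (i + 1) + 1 := by
  have h1 : 1 ≤ koff hW i := by
    by_contra h
    push_neg at h
    interval_cases h' : koff hW i
    · have h2 := koff_spec hW i
      rw [h'] at h2
      simp at h2
      exact hi1 h2
  have hle : koff hW (i + 1) ≤ koff hW i - 1 := by
    apply Nat.find_le
    rw [cast_shift, Nat.sub_add_cancel h1]
    exact koff_spec hW i
  have hge : ¬ (koff hW (i + 1) + 1 < koff hW i) := by
    intro hlt
    apply koff_min hW hlt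
    rw [← cast_shift]
    exact koff_spec hW (i + 1)
  omega

lemma rend_succ_eq {i : Fin n} (hi1 : i + 1 ∉ W) : rend hW i = rend hW (i + 1) := by
  unfold rend
  rw [koff_succ hW hi1, ← cast_shift]


lemma mem_compl_of_not_mem {i : Fin n} (hi : i ∉ W) : i ∈ ((↑W : Set (Fin n))ᶜ) := by
  simp [hi]

lemma val_one_of_two_le (hn : 2 ≤ n) : ((1 : Fin n) : ℕ) = 1 := by
  rw [Fin.val_one']
  exact Nat.mod_eq_of_lt hn

lemma adj_succ (hn : 2 ≤ n) {i : Fin n} (hi : i ∉ W) (hi1 : i + 1 ∉ W) :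
    ((cycleGraph n).induce ((↑W : Set (Fin n))ᶜ)).Adj
      ⟨i, mem_compl_of_not_mem hi⟩ ⟨i + 1, mem_compl_of_not_mem hi1⟩ := by
  show (cycleGraph n).Adj i (i + 1)
  rw [cycleGraph_adj']
  right
  rw [add_sub_cancel_left]
  exact val_one_of_two_le hn

lemma reach_rend (hn : 2 ≤ n) : ∀ (K : ℕ) (i : Fin n) (hi : i ∉ W), koff hW i = K →
    ((cycleGraph n).induce ((↑W : Set (Fin n))ᶜ)).Reachable
      ⟨i, mem_compl_of_not_mem hi⟩ ⟨rend hW i, mem_compl_of_not_mem (rend_not_mem hW hi)⟩ := by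
  intro K
  induction K with
  | zero =>
    intro i hi hK
    have h : rend hW i = i := by unfold rend; rw [hK]; simp
    have h2 : (⟨rend hW i, mem_compl_of_not_mem (rend_not_mem hW hi)⟩ :
        ((↑W : Set (Fin n))ᶜ : Set (Fin n))) = ⟨i, mem_compl_of_not_mem hi⟩ := Subtype.ext h
    rw [h2]
  | succ K ih =>
    intro i hi hK
    have hi1 : i + 1 ∉ W := by
      have h := koff_min hW (i := i) (m := 0) (by omega)
      simpa using h
    have hk1 : koff hW (i + 1) = K := by
      have h := koff_succ hW hi1
      omega
    have hr := ih (i + 1) hi1 hk1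
    have h2 : (⟨rend hW (i+1), mem_compl_of_not_mem (rend_not_mem hW hi1)⟩ :
        ((↑W : Set (Fin n))ᶜ : Set (Fin n))) =
        ⟨rend hW i, mem_compl_of_not_mem (rend_not_mem hW hi)⟩ :=
      Subtype.ext (rend_succ_eq hW hi1).symm
    rw [h2] at hr
    exact (adj_succ hn hi hi1).reachable.trans hr

lemma sub_val_one {u v : Fin n} (hn : 2 ≤ n) (h : ((u - v : Fin n) : ℕ) = 1) : u = v + 1 := by
  have h1 : u - v = (1 : Fin n) := by
    apply Fin.ext
    rw [h, val_one_of_two_le hn]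
  rw [sub_eq_iff_eq_add] at h1
  rw [h1]; ring

lemma rend_const (hn : 2 ≤ n) (u v : ((↑W : Set (Fin n))ᶜ : Set (Fin n)))
    (p : ((cycleGraph n).induce ((↑W : Set (Fin n))ᶜ)).Walk u v) :
    rend hW u.1 = rend hW v.1 := by
  induction p with
  | nil => rfl
  | @cons x b c h p ih =>
    have hx : (x : Fin n) ∉ W := fun hmem => x.2 (Finset.mem_coe.mpr hmem)
    have hb : (b : Fin n) ∉ W := fun hmem => b.2 (Finset.mem_coe.mpr hmem)
    have hadj : (cycleGraph n).Adj (x : Fin n) (b : Fin n) := h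
    rw [cycleGraph_adj'] at hadj
    have hxb : rend hW (x : Fin n) = rend hW (b : Fin n) := by
      rcases hadj with h1 | h1
      · have := sub_val_one hn h1
        rw [this]
        exact (rend_succ_eq hW (by rw [← this]; exact hx)).symm
      · have := sub_val_one hn h1
        rw [this]
        exact rend_succ_eq hW (by rw [← this]; exact hb)
    rw [hxb]; exact ih


lemma numComponents_eq (hn : 2 ≤ n) (hW : W.Nonempty) :
    Nat.card ((cycleGraph n).induce ((↑W : Set (Fin n))ᶜ)).ConnectedComponent
      = (Finset.univ.filter fun i : Fin n => i ∉ W ∧ i + 1 ∈ W).card := by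
  classical
  set G := (cycleGraph n).induce ((↑W : Set (Fin n))ᶜ) with hG
  set T := (Finset.univ.filter fun i : Fin n => i ∉ W ∧ i + 1 ∈ W) with hT
  let f : G.ConnectedComponent → Fin n :=
    ConnectedComponent.lift (fun v => rend hW v.1) (fun v w p _ => rend_const hW hn v w p)
  have hprop : ∀ c, f c ∈ T := by
    apply ConnectedComponent.ind
    intro v
    have hv : (v : Fin n) ∉ W := fun hmem => v.2 (Finset.mem_coe.mpr hmem)
    simp only [hT, Finset.mem_filter, Finset.mem_univ, true_and]
    exact ⟨rend_not_mem hW hv, rend_succ_mem hW v.1⟩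
  have hT1 : ∀ t : {x // x ∈ T}, (t : Fin n) ∉ W := by
    intro t
    exact (Finset.mem_filter.mp t.2).2.1
  have hT2 : ∀ t : {x // x ∈ T}, (t : Fin n) + 1 ∈ W := by
    intro t
    exact (Finset.mem_filter.mp t.2).2.2
  let e : G.ConnectedComponent ≃ {x // x ∈ T} :=
    { toFun := fun c => ⟨f c, hprop c⟩
      invFun := fun t => G.connectedComponentMk ⟨t.1, mem_compl_of_not_mem (hT1 t)⟩
      left_inv := by
        apply ConnectedComponent.ind
        intro v
        have hv : (v : Fin n) ∉ W := fun hmem => v.2 (Finset.mem_coe.mpr hmem)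
        show G.connectedComponentMk ⟨rend hW v.1, _⟩ = G.connectedComponentMk v
        have hr := reach_rend hW hn (koff hW v.1) v.1 hv rfl
        have := ConnectedComponent.sound hr.symm
        convert this using 2
      right_inv := by
        intro t
        apply Subtype.ext
        show rend hW t.1 = t.1
        have hk : koff hW (t : Fin n) = 0 := by
          rw [koff, Nat.find_eq_zero]
          simpa using hT2 t
        unfold rend
        rw [hk]
        simp }
  rw [Nat.card_congr e, Nat.card_eq_finsetCard]

end


section
variable {a : ℕ} [NeZero (2*a)]

lemma add_af_val (ha : 1 ≤ a) (h2 : a < 2*a) (v : Fin (2*a)) :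
    ((v + (⟨a, h2⟩ : Fin (2*a)) : Fin (2*a)) : ℕ)
      = if (v : ℕ) < a then (v : ℕ) + a else (v : ℕ) - a := by
  rw [Fin.add_def]
  simp only
  split
  · exact Nat.mod_eq_of_lt (by omega)
  · have hv := v.isLt
    have h3 : (v : ℕ) + a = ((v : ℕ) - a) + 1 * (2*a) := by omega
    rw [h3, Nat.add_mul_mod_self_right, Nat.mod_eq_of_lt (by omega)]

lemma add_af_af (ha : 1 ≤ a) (h2 : a < 2*a) (v : Fin (2*a)) :
    v + (⟨a, h2⟩ : Fin (2*a)) + (⟨a, h2⟩ : Fin (2*a)) = v := by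
  have h0 : (⟨a, h2⟩ : Fin (2*a)) + (⟨a, h2⟩ : Fin (2*a)) = 0 := by
    apply Fin.ext
    rw [Fin.add_def]
    show (a + a) % (2*a) = 0
    have h4 : a + a = 2*a := by ring
    rw [h4, Nat.mod_self]
  rw [add_assoc, h0, add_zero]

lemma T_eq_C1 (ha : 1 ≤ a) {W : Finset (Fin (2*a))}
    (hstar : ∀ v : Fin (2*a), v + (⟨a, by omega⟩ : Fin (2*a)) ∈ W ↔ v ∉ W) :
    (univ.filter fun i : Fin (2*a) => i ∉ W ∧ i + 1 ∈ W).card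
      = (univ.filter fun i : Fin (2*a) => (i : ℕ) < a ∧ ¬(i ∈ W ↔ i + 1 ∈ W)).card := by
  classical
  have h2 : a < 2*a := by omega
  set af : Fin (2*a) := ⟨a, h2⟩ with haf
  have hsucc : ∀ i : Fin (2*a), (i + af) + 1 = (i + 1) + af := fun i => add_right_comm i af 1
  have hmem1 : ∀ i : Fin (2*a), i + af ∈ W ↔ i ∉ W := hstar
  have hmem2 : ∀ i : Fin (2*a), (i + af) + 1 ∈ W ↔ i + 1 ∉ W := by
    intro i; rw [hsucc]; exact hstar (i+1)
  have hval : ∀ v : Fin (2*a), ((v + af : Fin (2*a)) : ℕ)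
      = if (v : ℕ) < a then (v : ℕ) + a else (v : ℕ) - a := add_af_val ha h2
  have haa : ∀ v : Fin (2*a), v + af + af = v := add_af_af ha h2
  apply card_nbij' (fun i : Fin (2*a) => if (i : ℕ) < a then i else i + af)
    (fun i : Fin (2*a) => if i ∈ W then i + af else i)
  · intro i hi
    rw [mem_coe, mem_filter] at hi ⊢
    dsimp only
    obtain ⟨-, hiW, hi1W⟩ := hi
    refine ⟨mem_univ _, ?_⟩
    by_cases hlt : (i : ℕ) < a
    · rw [if_pos hlt]
      exact ⟨hlt, by tauto⟩
    · rw [if_neg hlt]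
      constructor
      · rw [hval, if_neg hlt]
        have := i.isLt; omega
      · rw [hmem1, hmem2]
        tauto
  · intro i hi
    rw [mem_coe, mem_filter] at hi ⊢
    dsimp only
    obtain ⟨-, hlt, hch⟩ := hi
    refine ⟨mem_univ _, ?_⟩
    by_cases hiW : i ∈ W
    · rw [if_pos hiW]
      rw [hmem1, hmem2]
      tauto
    · rw [if_neg hiW]
      tauto
  · intro i hi
    rw [mem_coe, mem_filter] at hi
    obtain ⟨-, hiW, hi1W⟩ := hi
    by_cases hlt : (i : ℕ) < a
    · simp [hlt, hiW]
    · have hW2 : i + af ∈ W := (hmem1 i).mpr hiW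
      simp [hlt, hW2, haa]
  · intro i hi
    rw [mem_coe, mem_filter] at hi
    obtain ⟨-, hlt, hch⟩ := hi
    by_cases hiW : i ∈ W
    · have : ¬ ((i + af : Fin (2*a)) : ℕ) < a := by
        rw [hval]; simp only [hlt, if_pos]; omega
      simp [hiW, this, haa]
    · simp [hiW, hlt]


lemma mem_image_val {N : ℕ} {W : Finset (Fin N)} {m : ℕ} (h : m < N) :
    m ∈ W.image Fin.val ↔ (⟨m, h⟩ : Fin N) ∈ W := by
  simp only [mem_image]
  constructor
  · rintro ⟨x, hx, rfl⟩
    convert hx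
  · intro hm
    exact ⟨⟨m, h⟩, hm, rfl⟩

lemma succ_val_of_lt (ha : 1 ≤ a) {i : Fin (2*a)} (h : (i : ℕ) < a) :
    ((i + 1 : Fin (2*a)) : ℕ) = (i : ℕ) + 1 := by
  rw [Fin.add_def]
  have h1 : ((1 : Fin (2*a)) : ℕ) = 1 := by
    rw [Fin.val_one']
    exact Nat.mod_eq_of_lt (by omega)
  rw [h1]
  exact Nat.mod_eq_of_lt (by omega)

lemma C1_eq_Cn (ha : 1 ≤ a) (W : Finset (Fin (2*a))) :
    (univ.filter fun i : Fin (2*a) => (i : ℕ) < a ∧ ¬(i ∈ W ↔ i + 1 ∈ W)).card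
      = ((range a).filter fun m =>
          ¬(m ∈ W.image Fin.val ↔ m+1 ∈ W.image Fin.val)).card := by
  classical
  have key : ∀ i : Fin (2*a), (i : ℕ) < a →
      ((i ∈ W ↔ i + 1 ∈ W) ↔ ((i:ℕ) ∈ W.image Fin.val ↔ (i:ℕ)+1 ∈ W.image Fin.val)) := by
    intro i hi
    rw [mem_image_val (show (i:ℕ) < 2*a by omega), mem_image_val (show (i:ℕ)+1 < 2*a by omega)]
    have e1 : (⟨(i:ℕ), by omega⟩ : Fin (2*a)) = i := by apply Fin.ext; rfl
    have e2 : (⟨(i:ℕ)+1, by omega⟩ : Fin (2*a)) = i + 1 := by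
      apply Fin.ext
      rw [succ_val_of_lt ha hi]
    rw [e1, e2]
  refine card_bij' (fun (i : Fin (2*a)) (_ : i ∈ univ.filter fun i : Fin (2*a) => (i : ℕ) < a ∧ ¬(i ∈ W ↔ i + 1 ∈ W)) => (i : ℕ))
    (fun m hm => (⟨m, by have := (mem_filter.mp hm).1; rw [mem_range] at this; omega⟩ : Fin (2*a)))
    ?_ ?_ ?_ ?_
  · intro i hi
    rw [mem_filter] at hi ⊢
    obtain ⟨-, hlt, hch⟩ := hi
    exact ⟨mem_range.mpr hlt, fun hc => hch ((key i hlt).mpr hc)⟩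
  · intro m hm
    rw [mem_filter] at hm ⊢
    obtain ⟨hr, hch⟩ := hm
    rw [mem_range] at hr
    refine ⟨mem_univ _, hr, fun hc => hch ?_⟩
    exact (key _ hr).mp hc
  · intro i _
    apply Fin.ext
    rfl
  · intro m _
    rfl

lemma Cn_Ph (ha : 1 ≤ a) (WN : Finset ℕ) (h0 : 0 ∉ WN) (hA : a ∈ WN) :
    ((a-1 ∈ WN → ((range a).filter (fun m => ¬(m ∈ WN ↔ (m+1) % a ∈ WN))).card
        = ((range a).filter (fun m => ¬(m ∈ WN ↔ m+1 ∈ WN))).card + 1) ∧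
     (a-1 ∉ WN → ((range a).filter (fun m => ¬(m ∈ WN ↔ m+1 ∈ WN))).card
        = ((range a).filter (fun m => ¬(m ∈ WN ↔ (m+1) % a ∈ WN))).card + 1)) := by
  classical
  set Cn := (range a).filter (fun m => ¬(m ∈ WN ↔ m+1 ∈ WN)) with hCn
  set Ph := (range a).filter (fun m => ¬(m ∈ WN ↔ (m+1) % a ∈ WN)) with hPh
  have herase : Ph.erase (a-1) = Cn.erase (a-1) := by
    ext m
    simp only [mem_erase, hCn, hPh, mem_filter, mem_range]
    constructor
    · rintro ⟨hne, hm, hch⟩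
      refine ⟨hne, ⟨hm, ?_⟩⟩
      rwa [show (m+1) % a = m+1 from Nat.mod_eq_of_lt (by omega)] at hch
    · rintro ⟨hne, hm, hch⟩
      refine ⟨hne, ⟨hm, ?_⟩⟩
      rwa [show (m+1) % a = m+1 from Nat.mod_eq_of_lt (by omega)]
  have hamod : a % a = 0 := Nat.mod_self a
  have hsub : a - 1 + 1 = a := by omega
  constructor
  · intro hmem
    have hPhmem : a - 1 ∈ Ph := by
      rw [hPh, mem_filter, mem_range]
      refine ⟨by omega, ?_⟩
      rw [hsub, hamod]
      tauto
    have hCnmem : a - 1 ∉ Cn := by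
      rw [hCn, mem_filter]
      rw [hsub]
      tauto
    rw [← Finset.card_erase_add_one hPhmem, herase, Finset.erase_eq_of_notMem hCnmem]
  · intro hmem
    have hPhmem : a - 1 ∉ Ph := by
      rw [hPh, mem_filter]
      rw [hsub, hamod]
      tauto
    have hCnmem : a - 1 ∈ Cn := by
      rw [hCn, mem_filter, mem_range]
      refine ⟨by omega, ?_⟩
      rw [hsub]
      tauto
    rw [← Finset.card_erase_add_one hCnmem, ← herase, Finset.erase_eq_of_notMem hPhmem]


abbrev parw (E : Finset ℕ) (m : ℕ) : Prop := (E.filter (· < m)).card % 2 = 1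

def PhiM (a : ℕ) (W : Finset (Fin (2*a))) : Finset ℕ :=
  (range a).filter (fun m => ¬(m ∈ W.image Fin.val ↔ (m+1) % a ∈ W.image Fin.val))

def WofM (a : ℕ) (E : Finset ℕ) : Finset (Fin (2*a)) :=
  univ.filter (fun v : Fin (2*a) =>
    ((v : ℕ) < a ∧ parw E (v : ℕ)) ∨ (¬ ((v : ℕ) < a) ∧ ¬ parw E ((v : ℕ) - a)))

lemma mem_WofM {E : Finset ℕ} {v : Fin (2*a)} :
    v ∈ WofM a E ↔
      (((v : ℕ) < a ∧ parw E (v : ℕ)) ∨ (¬ ((v : ℕ) < a) ∧ ¬ parw E ((v : ℕ) - a))) := by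
  rw [WofM, mem_filter]
  simp

lemma mem_PhiM {W : Finset (Fin (2*a))} {m : ℕ} :
    m ∈ PhiM a W ↔ m < a ∧ ¬(m ∈ W.image Fin.val ↔ (m+1) % a ∈ W.image Fin.val) := by
  rw [PhiM, mem_filter, mem_range]

lemma filter_lt_succ (E : Finset ℕ) (m : ℕ) :
    (E.filter (· < m+1)).card = (E.filter (· < m)).card + (if m ∈ E then 1 else 0) := by
  classical
  have h : E.filter (· < m+1) = (E.filter (· < m)) ∪ (E.filter (· = m)) := by
    ext x
    simp only [mem_union, mem_filter]
    constructor
    · rintro ⟨hx, hlt⟩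
      rcases Nat.lt_or_ge x m with h | h
      · exact Or.inl ⟨hx, h⟩
      · exact Or.inr ⟨hx, by omega⟩
    · rintro (⟨hx, hlt⟩ | ⟨hx, heq⟩)
      · exact ⟨hx, by omega⟩
      · exact ⟨hx, by omega⟩
  rw [h, card_union_of_disjoint, Finset.filter_eq']
  · split <;> simp
  · rw [Finset.disjoint_filter]
    intro x _ hlt heq
    omega

lemma parw_zero (E : Finset ℕ) : ¬ parw E 0 := by
  simp [parw]

lemma parw_succ (E : Finset ℕ) (m : ℕ) :
    parw E (m+1) ↔ ¬(parw E m ↔ m ∈ E) := by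
  unfold parw
  rw [filter_lt_succ]
  split <;> rename_i h <;> simp [h] <;> omega

lemma parw_last {E : Finset ℕ} (hE : E ⊆ range a) (heven : Even E.card) (ha : 1 ≤ a) :
    parw E (a-1) ↔ a-1 ∈ E := by
  classical
  have hfull : E.filter (· < a) = E := by
    apply Finset.filter_true_of_mem
    intro x hx
    exact mem_range.mp (hE hx)
  have hstep : (E.filter (· < a)).card = (E.filter (· < a-1)).card + (if a-1 ∈ E then 1 else 0) := by
    have := filter_lt_succ E (a-1)
    rwa [show a - 1 + 1 = a by omega] at this
  rw [hfull] at hstep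
  obtain ⟨c, hc⟩ := heven
  unfold parw
  split at hstep <;> rename_i h <;> simp [h] <;> omega


lemma mem_image_WofM (ha : 1 ≤ a) {E : Finset ℕ} {m : ℕ} (hm : m < a) :
    m ∈ (WofM a E).image Fin.val ↔ parw E m := by
  rw [mem_image_val (show m < 2*a by omega), mem_WofM]
  simp [hm]

lemma hx_WofM (ha : 1 ≤ a) (E : Finset ℕ) (m : ℕ) (hm : m < a) :
    ((⟨m, by omega⟩ : Fin (2*a)) ∈ WofM a E ↔ (⟨m+a, by omega⟩ : Fin (2*a)) ∉ WofM a E) := by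
  rw [mem_WofM, mem_WofM]
  simp only [show ¬(m + a < a) from by omega, Nat.add_sub_cancel]
  simp [hm]

lemma h0_WofM (ha : 1 ≤ a) (E : Finset ℕ) :
    (⟨0, by omega⟩ : Fin (2*a)) ∉ WofM a E := by
  have hv0 : ((⟨0, by omega⟩ : Fin (2*a)) : ℕ) = 0 := rfl
  rw [mem_WofM, hv0]
  rintro (⟨-, hp⟩ | ⟨h, -⟩)
  · exact parw_zero E hp
  · exact h (by omega)

lemma PhiM_WofM (ha : 1 ≤ a) {E : Finset ℕ} (hE : E ⊆ range a) (heven : Even E.card) :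
    PhiM a (WofM a E) = E := by
  ext m
  rw [mem_PhiM]
  by_cases hm : m < a
  · have hmE : m ∈ E ↔ m ∈ E := Iff.rfl
    rw [mem_image_WofM ha hm]
    by_cases hlast : m = a - 1
    · subst hlast
      rw [show (a - 1 + 1) % a = 0 from by rw [show a - 1 + 1 = a from by omega]; exact Nat.mod_self a]
      have h0' : (0 : ℕ) ∈ (WofM a E).image Fin.val ↔ parw E 0 := mem_image_WofM ha (by omega)
      rw [h0', parw_last hE heven ha]
      have := parw_zero E
      tauto
    · have hm1 : m + 1 < a := by omega
      rw [show (m + 1) % a = m + 1 from Nat.mod_eq_of_lt hm1, mem_image_WofM ha hm1, parw_succ]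
      tauto
  · have hnE : m ∉ E := fun h => hm (mem_range.mp (hE h))
    tauto

lemma hstar_of_hx (ha : 1 ≤ a) {W : Finset (Fin (2*a))}
    (hx : ∀ m, (hm : m < a) → ((⟨m, by omega⟩ : Fin (2*a)) ∈ W ↔ (⟨m+a, by omega⟩ : Fin (2*a)) ∉ W)) :
    ∀ v : Fin (2*a), v + (⟨a, by omega⟩ : Fin (2*a)) ∈ W ↔ v ∉ W := by
  intro v
  have h2 : a < 2*a := by omega
  have hval := add_af_val ha h2 v
  by_cases hv : (v : ℕ) < a
  · have e1 : (v + (⟨a, h2⟩ : Fin (2*a))) = ⟨(v:ℕ) + a, by omega⟩ := by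
      apply Fin.ext
      rw [hval, if_pos hv]
    have e2 : v = ⟨(v:ℕ), by omega⟩ := by apply Fin.ext; rfl
    rw [e1]
    conv_rhs => rw [e2]
    have := hx (v : ℕ) hv
    tauto
  · have hlt : (v : ℕ) - a < a := by have := v.isLt; omega
    have e1 : (v + (⟨a, h2⟩ : Fin (2*a))) = ⟨(v:ℕ) - a, by omega⟩ := by
      apply Fin.ext
      rw [hval, if_neg hv]
    have e2 : (⟨(v:ℕ) - a + a, by omega⟩ : Fin (2*a)) = v := by
      apply Fin.ext
      show (v:ℕ) - a + a = (v:ℕ)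
      omega
    rw [e1]
    have := hx ((v:ℕ) - a) hlt
    rw [e2] at this
    tauto

lemma WofM_PhiM (ha : 1 ≤ a) {W : Finset (Fin (2*a))}
    (hx : ∀ m, (hm : m < a) → ((⟨m, by omega⟩ : Fin (2*a)) ∈ W ↔ (⟨m+a, by omega⟩ : Fin (2*a)) ∉ W))
    (h0 : (⟨0, by omega⟩ : Fin (2*a)) ∉ W) :
    WofM a (PhiM a W) = W := by
  have key : ∀ m, m < a → (parw (PhiM a W) m ↔ m ∈ W.image Fin.val) := by
    intro m
    induction m with
    | zero =>
      intro _
      rw [mem_image_val (show 0 < 2*a by omega)]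
      have := parw_zero (PhiM a W)
      tauto
    | succ m ih =>
      intro hm1
      have hm : m < a := by omega
      have hih := ih hm
      rw [parw_succ]
      have hPh : m ∈ PhiM a W ↔ ¬(m ∈ W.image Fin.val ↔ m+1 ∈ W.image Fin.val) := by
        rw [mem_PhiM, show (m+1) % a = m + 1 from Nat.mod_eq_of_lt hm1]
        tauto
      rw [hPh, hih]
      tauto
  ext v
  rw [mem_WofM]
  by_cases hv : (v : ℕ) < a
  · have e2 : (⟨(v:ℕ), by omega⟩ : Fin (2*a)) = v := by apply Fin.ext; rfl
    have hk := key (v : ℕ) hv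
    rw [mem_image_val (show (v:ℕ) < 2*a by omega), e2] at hk
    tauto
  · have hlt : (v : ℕ) - a < a := by have := v.isLt; omega
    have hk := key ((v:ℕ) - a) hlt
    rw [mem_image_val (show (v:ℕ) - a < 2*a by omega)] at hk
    have hxv := hx ((v:ℕ) - a) hlt
    have e2 : (⟨(v:ℕ) - a + a, by omega⟩ : Fin (2*a)) = v := by
      apply Fin.ext
      show (v:ℕ) - a + a = (v:ℕ)
      omega
    rw [e2] at hxv
    tauto

lemma xor_of_iff_not {p q : Prop} (h : p ↔ ¬q) : Xor p q := by
  unfold Xor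
  tauto

lemma iff_not_of_xor {p q : Prop} (h : Xor p q) : p ↔ ¬q := by
  unfold Xor at h
  tauto

end

lemma mem_mk_congr {N : ℕ} (W : Finset (Fin N)) {m m' : ℕ} (h : m = m')
    (hm : m < N) (hm' : m' < N) : ((⟨m, hm⟩ : Fin N) ∈ W ↔ (⟨m', hm'⟩ : Fin N) ∈ W) := by
  subst h; rfl

theorem card_alternating_corner_sets (a j : ℕ) (ha : 1 ≤ a) (hj : 1 ≤ j)
    (hjeven : Even j)
    (v₁ va va₁ v₂a : Fin (2 * a))
    (hv₁ : (v₁ : ℕ) = 0) (hva : (va : ℕ) = a - 1)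
    (hva₁ : (va₁ : ℕ) = a) (hv₂a : (v₂a : ℕ) = 2 * a - 1) :
    (Finset.univ.filter (fun W : Finset (Fin (2 * a)) =>
        (∀ i : Fin a,
          Xor ((⟨i.1, by have := i.isLt; omega⟩ : Fin (2 * a)) ∈ W)
               ((⟨i.1 + a, by have := i.isLt; omega⟩ : Fin (2 * a)) ∈ W)) ∧
        ((v₁ ∉ W ∧ v₂a ∉ W ∧ va ∈ W ∧ va₁ ∈ W ∧ cycNumComponents (2 * a) W = j - 1) ∨
         (v₁ ∉ W ∧ va ∉ W ∧ va₁ ∈ W ∧ v₂a ∈ W ∧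
           cycNumComponents (2 * a) W = j + 1)))).card = a.choose j := by
  classical
  haveI : NeZero (2*a) := ⟨by omega⟩
  have h2a : a < 2*a := by omega
  have p0 : (0:ℕ) < 2*a := by omega
  have p1 : a-1 < 2*a := by omega
  have p2 : a < 2*a := by omega
  have p3 : 2*a-1 < 2*a := by omega
  have hv₁' : v₁ = (⟨0, p0⟩ : Fin (2*a)) := Fin.ext hv₁
  have hva' : va = (⟨a-1, p1⟩ : Fin (2*a)) := Fin.ext hva
  have hva₁' : va₁ = (⟨a, p2⟩ : Fin (2*a)) := Fin.ext hva₁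
  have hv₂a' : v₂a = (⟨2*a-1, p3⟩ : Fin (2*a)) := Fin.ext hv₂a
  subst hv₁' hva' hva₁' hv₂a'
  have hPiff : ∀ W : Finset (Fin (2*a)),
      ((∀ i : Fin a,
          Xor ((⟨i.1, by have := i.isLt; omega⟩ : Fin (2 * a)) ∈ W)
               ((⟨i.1 + a, by have := i.isLt; omega⟩ : Fin (2 * a)) ∈ W)) ∧
        (((⟨0, by omega⟩ : Fin (2*a)) ∉ W ∧ (⟨2*a-1, by omega⟩ : Fin (2*a)) ∉ W ∧
            (⟨a-1, by omega⟩ : Fin (2*a)) ∈ W ∧ (⟨a, by omega⟩ : Fin (2*a)) ∈ W ∧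
            cycNumComponents (2 * a) W = j - 1) ∨
         ((⟨0, by omega⟩ : Fin (2*a)) ∉ W ∧ (⟨a-1, by omega⟩ : Fin (2*a)) ∉ W ∧
            (⟨a, by omega⟩ : Fin (2*a)) ∈ W ∧ (⟨2*a-1, by omega⟩ : Fin (2*a)) ∈ W ∧
           cycNumComponents (2 * a) W = j + 1)))
      ↔ ((∀ m, (hm : m < a) →
            ((⟨m, by omega⟩ : Fin (2*a)) ∈ W ↔ (⟨m+a, by omega⟩ : Fin (2*a)) ∉ W))
          ∧ (⟨0, by omega⟩ : Fin (2*a)) ∉ W ∧ (PhiM a W).card = j) := by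
    intro W
    have hxor_equiv : (∀ i : Fin a,
          Xor ((⟨i.1, by have := i.isLt; omega⟩ : Fin (2 * a)) ∈ W)
               ((⟨i.1 + a, by have := i.isLt; omega⟩ : Fin (2 * a)) ∈ W))
        ↔ (∀ m, (hm : m < a) →
            ((⟨m, by omega⟩ : Fin (2*a)) ∈ W ↔ (⟨m+a, by omega⟩ : Fin (2*a)) ∉ W)) := by
      constructor
      · intro h m hm
        exact iff_not_of_xor (h ⟨m, hm⟩)
      · intro h i
        exact xor_of_iff_not (h i.1 i.2)
    constructor
    · rintro ⟨hxor, hdisj⟩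
      have hx := hxor_equiv.mp hxor
      have hstar := hstar_of_hx ha hx
      have h0 : (⟨0, by omega⟩ : Fin (2*a)) ∉ W := by
        rcases hdisj with ⟨h, -⟩ | ⟨h, -⟩ <;> exact h
      have hA : (⟨a, by omega⟩ : Fin (2*a)) ∈ W := by
        have h := hx 0 (by omega)
        have e := mem_mk_congr W (Nat.zero_add a) (by omega) (by omega)
        tauto
      have hAN : a ∈ W.image Fin.val := (mem_image_val h2a).mpr hA
      have h0N : 0 ∉ W.image Fin.val := fun hc => h0 ((mem_image_val (by omega)).mp hc)
      have hWne : W.Nonempty := ⟨_, hA⟩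
      have hchain : cycNumComponents (2*a) W
          = ((range a).filter fun m =>
              ¬(m ∈ W.image Fin.val ↔ m+1 ∈ W.image Fin.val)).card := by
        rw [cycNumComponents, numComponents_eq (by omega) hWne, T_eq_C1 ha hstar,
          C1_eq_Cn ha W]
      have hCP := Cn_Ph ha (W.image Fin.val) h0N hAN
      refine ⟨hx, h0, ?_⟩
      rcases hdisj with ⟨-, -, h3, -, h5⟩ | ⟨-, h3, -, -, h5⟩
      · have hm : a-1 ∈ W.image Fin.val := (mem_image_val (by omega)).mpr h3
        have hc1 := hCP.1 hm
        rw [PhiM]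
        omega
      · have hm : a-1 ∉ W.image Fin.val := fun hc => h3 ((mem_image_val (by omega)).mp hc)
        have hc2 := hCP.2 hm
        rw [PhiM]
        omega
    · rintro ⟨hx, h0, hcard⟩
      have hstar := hstar_of_hx ha hx
      have hA : (⟨a, by omega⟩ : Fin (2*a)) ∈ W := by
        have h := hx 0 (by omega)
        have e := mem_mk_congr W (Nat.zero_add a) (by omega) (by omega)
        tauto
      have hAN : a ∈ W.image Fin.val := (mem_image_val h2a).mpr hA
      have h0N : 0 ∉ W.image Fin.val := fun hc => h0 ((mem_image_val (by omega)).mp hc)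
      have hWne : W.Nonempty := ⟨_, hA⟩
      have hchain : cycNumComponents (2*a) W
          = ((range a).filter fun m =>
              ¬(m ∈ W.image Fin.val ↔ m+1 ∈ W.image Fin.val)).card := by
        rw [cycNumComponents, numComponents_eq (by omega) hWne, T_eq_C1 ha hstar,
          C1_eq_Cn ha W]
      have hCP := Cn_Ph ha (W.image Fin.val) h0N hAN
      rw [PhiM] at hcard
      have hxlast := hx (a-1) (by omega)
      have he2 := mem_mk_congr W (show a-1+a = 2*a-1 by omega) (by omega) (by omega)
      refine ⟨hxor_equiv.mpr hx, ?_⟩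
      by_cases hm : (⟨a-1, by omega⟩ : Fin (2*a)) ∈ W
      · left
        have hmN : a-1 ∈ W.image Fin.val := (mem_image_val (by omega)).mpr hm
        have hc1 := hCP.1 hmN
        exact ⟨h0, fun hc => (hxlast.mp hm) (he2.mpr hc), hm, hA, by omega⟩
      · right
        have hmN : a-1 ∉ W.image Fin.val := fun hc => hm ((mem_image_val (by omega)).mp hc)
        have hc2 := hCP.2 hmN
        exact ⟨h0, hm, hA, he2.mp (Classical.byContradiction fun hc => hm (hxlast.mpr hc)), by omega⟩
  rw [show a.choose j = (powersetCard j (range a)).card from by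
    rw [card_powersetCard, card_range]]
  refine card_bij' (fun W _ => PhiM a W) (fun E _ => WofM a E) ?_ ?_ ?_ ?_
  · intro W hW
    rw [mem_filter] at hW
    have h := (hPiff W).mp hW.2
    rw [mem_powersetCard]
    exact ⟨filter_subset _ _, h.2.2⟩
  · intro E hE
    rw [mem_powersetCard] at hE
    rw [mem_filter]
    refine ⟨mem_univ _, (hPiff _).mpr ⟨fun m hm => hx_WofM ha E m hm, h0_WofM ha E, ?_⟩⟩
    rw [PhiM_WofM ha hE.1 (hE.2 ▸ hjeven)]
    exact hE.2
  · intro W hW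
    rw [mem_filter] at hW
    have h := (hPiff W).mp hW.2
    exact WofM_PhiM ha h.1 h.2.1
  · intro E hE
    rw [mem_powersetCard] at hE
    exact PhiM_WofM ha hE.1 (hE.2 ▸ hjeven)
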